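/- Let X be the attractor of an IFS {f_i}_{i∈Λ}, f_i(x) = rx + a_i with 0 < r < 1, and suppose 0 ∈ X ⊆ [0,1). Define s_n = log N_{r^n}(X_n) with X_n = {f_i(0) : i ∈ Λ^n}. Then there is a constant C such that s_{m+n} ≥ s_m + s_n − C for all m, n ≥ 1. -/

import Mathlib

open Set Pointwise

/-- The covering number of `Y` at scale `ε`. -/
noncomputable def covN (ε : ℝ) (Y : Set ℝ) : ℕ :=
  sInf {n : ℕ | ∃ c : Fin n → Set ℝ,
    (∀ i, EMetric.diam (c i) ≤ ENNReal.ofReal ε) ∧ Y ⊆ ⋃ i, c i}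

/-- Composition `f_{i_1} ∘ ⋯ ∘ f_{i_n}` of the maps along a finite word. -/
def wordComp {Λ : Type*} (f : Λ → ℝ → ℝ) : (n : ℕ) → (Fin n → Λ) → ℝ → ℝ
  | 0, _, x => x
  | n + 1, i, x => f (i 0) (wordComp f n (fun k => i k.succ) x)

/-- The `n`-th approximation `X_n = {f_i(0) : i ∈ Λⁿ}`. -/
def iterPts {Λ : Type*} (f : Λ → ℝ → ℝ) (n : ℕ) : Set ℝ :=
  Set.range (fun i : Fin n → Λ => wordComp f n i 0)

lemma covN_le_of_cover {n : ℕ} (ε : ℝ) (Y : Set ℝ) (c : Fin n → Set ℝ)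
    (hd : ∀ i, EMetric.diam (c i) ≤ ENNReal.ofReal ε) (hc : Y ⊆ ⋃ i, c i) :
    covN ε Y ≤ n :=
  Nat.sInf_le ⟨c, hd, hc⟩

lemma covN_le_card {ι : Type*} (ε : ℝ) (Y : Set ℝ) (s : Finset ι) (c : ι → Set ℝ)
    (hd : ∀ i ∈ s, EMetric.diam (c i) ≤ ENNReal.ofReal ε)
    (hc : ∀ y ∈ Y, ∃ i ∈ s, y ∈ c i) :
    covN ε Y ≤ s.card := by
  apply covN_le_of_cover ε Y (fun j => c (s.equivFin.symm j))
  · intro j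
    exact hd _ (s.equivFin.symm j).2
  · intro y hy
    obtain ⟨i, hi, hyc⟩ := hc y hy
    exact Set.mem_iUnion.mpr ⟨s.equivFin ⟨i, hi⟩, by simpa using hyc⟩

lemma covN_spec (ε : ℝ) (Y : Set ℝ) (hfin : Y.Finite) :
    ∃ c : Fin (covN ε Y) → Set ℝ,
      (∀ i, EMetric.diam (c i) ≤ ENNReal.ofReal ε) ∧ Y ⊆ ⋃ i, c i := by
  have hne : {n : ℕ | ∃ c : Fin n → Set ℝ,
      (∀ i, EMetric.diam (c i) ≤ ENNReal.ofReal ε) ∧ Y ⊆ ⋃ i, c i}.Nonempty := by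
    refine ⟨hfin.toFinset.card, fun j => {(hfin.toFinset.equivFin.symm j : ℝ)}, ?_, ?_⟩
    · intro i; show Metric.ediam _ ≤ _; simp [EMetric.diam_singleton]
    · intro y hy
      have hy' : y ∈ hfin.toFinset := hfin.mem_toFinset.mpr hy
      exact Set.mem_iUnion.mpr ⟨hfin.toFinset.equivFin ⟨y, hy'⟩, by simp⟩
  exact Nat.sInf_mem hne

lemma one_le_covN (ε : ℝ) (Y : Set ℝ) (hfin : Y.Finite) (hne : Y.Nonempty) :
    1 ≤ covN ε Y := by
  obtain ⟨c, _, hc⟩ := covN_spec ε Y hfin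
  rcases Nat.eq_zero_or_pos (covN ε Y) with h | h
  · exfalso
    obtain ⟨y, hy⟩ := hne
    obtain ⟨j, -⟩ := Set.mem_iUnion.mp (hc hy)
    exact absurd j.2 (by omega)
  · exact h

lemma iterPts_subset_attractor {Λ : Type*} (f : Λ → ℝ → ℝ) (X : Set ℝ)
    (hXinv : X = ⋃ i : Λ, f i '' X) (h0X : (0 : ℝ) ∈ X) (n : ℕ) :
    iterPts f n ⊆ X := by
  induction n with
  | zero => rintro x ⟨i, rfl⟩; exact h0X
  | succ n ih =>
    rintro x ⟨i, rfl⟩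
    have hx : wordComp f n (fun k => i k.succ) 0 ∈ X := ih ⟨_, rfl⟩
    rw [hXinv]
    exact Set.mem_iUnion.mpr ⟨i 0, ⟨_, hx, rfl⟩⟩

lemma step_mem_iterPts {Λ : Type*} (f : Λ → ℝ → ℝ) (c : Λ) {k : ℕ} {z : ℝ}
    (hz : z ∈ iterPts f k) : f c z ∈ iterPts f (k + 1) := by
  obtain ⟨j, rfl⟩ := hz
  exact ⟨Fin.cons c j, by simp [wordComp, Fin.cons_zero, Fin.cons_succ]⟩

lemma add_mem_iterPts {Λ : Type*} (f : Λ → ℝ → ℝ) (r : ℝ) (a : Λ → ℝ)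
    (hf : ∀ i x, f i x = r * x + a i) :
    ∀ (m n : ℕ) (x y : ℝ), x ∈ iterPts f m → y ∈ iterPts f n →
      x + r ^ m * y ∈ iterPts f (m + n) := by
  intro m
  induction m with
  | zero =>
    intro n x y hx hy
    obtain ⟨i, rfl⟩ := hx
    simpa [wordComp] using hy
  | succ m ih =>
    intro n x y hx hy
    obtain ⟨i, rfl⟩ := hx
    set x' := wordComp f m (fun k => i k.succ) 0 with hx'
    have h1 : x' + r ^ m * y ∈ iterPts f (m + n) := ih n x' y ⟨_, rfl⟩ hy
    have h2 : f (i 0) (x' + r ^ m * y) ∈ iterPts f (m + n + 1) := step_mem_iterPts f _ h1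
    have heq : f (i 0) (x' + r ^ m * y)
        = wordComp f (m + 1) i 0 + r ^ (m + 1) * y := by
      simp only [wordComp, hf]
      ring
    rw [heq] at h2
    have hmn : m + n + 1 = m + 1 + n := by omega
    rwa [hmn] at h2

/-- For `s_n = log N_{rⁿ}(X_n)`, there is a constant `C` with
`s_{m+n} ≥ s_m + s_n − C` for all `m, n ≥ 1`. -/
theorem selfSimilar_log_covering_superadditive {Λ : Type*} [Fintype Λ]
    (f : Λ → ℝ → ℝ) (r : ℝ) (a : Λ → ℝ) (hΛ : 2 ≤ Fintype.card Λ)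
    (hr0 : 0 < r) (hr1 : r < 1) (hf : ∀ i x, f i x = r * x + a i)
    (X : Set ℝ) (hXne : X.Nonempty) (hXc : IsCompact X)
    (hXinv : X = ⋃ i : Λ, f i '' X)
    (h0X : (0 : ℝ) ∈ X) (hX01 : X ⊆ Set.Ico 0 1) :
    ∃ C : ℝ, ∀ m n : ℕ, 1 ≤ m → 1 ≤ n →
      Real.log (covN (r ^ (m + n)) (iterPts f (m + n))) ≥
        Real.log (covN (r ^ m) (iterPts f m)) +
        Real.log (covN (r ^ n) (iterPts f n)) - C := by
  classical
  refine ⟨Real.log 3, fun m n hm hn => ?_⟩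
  have hΛne : Nonempty Λ := Fintype.card_pos_iff.mp (by omega)
  have hrm : (0 : ℝ) < r ^ m := pow_pos hr0 m
  have hrm' : r ^ m ≠ 0 := hrm.ne'
  have hrn : (0 : ℝ) < r ^ n := pow_pos hr0 n
  have hrmn : (0 : ℝ) < r ^ (m + n) := pow_pos hr0 _
  have hpowle : r ^ (m + n) ≤ r ^ m :=
    pow_le_pow_of_le_one hr0.le hr1.le (by omega)
  have hfin : ∀ k, (iterPts f k).Finite := fun k => Set.finite_range _
  have hne' : ∀ k, (iterPts f k).Nonempty :=
    fun k => ⟨_, ⟨fun _ => Classical.arbitrary Λ, rfl⟩⟩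
  have hsub : ∀ k, iterPts f k ⊆ Set.Ico 0 1 :=
    fun k => (iterPts_subset_attractor f X hXinv h0X k).trans hX01
  set Nm := covN (r ^ m) (iterPts f m) with hNm
  set Nn := covN (r ^ n) (iterPts f n) with hNn
  set NN := covN (r ^ (m + n)) (iterPts f (m + n)) with hNN
  obtain ⟨c, hcd, hcc⟩ := covN_spec (r ^ (m + n)) (iterPts f (m + n)) (hfin _)
  -- the grid of cells of size r^m
  set K := ⌈1 / r ^ m⌉₊ with hK
  set I : ℕ → Set ℝ := fun k => Set.Ico ((k : ℝ) * r ^ m) (((k : ℝ) + 1) * r ^ m) with hI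
  set D := (Finset.range K).filter (fun k => (iterPts f m ∩ I k).Nonempty) with hD
  -- N_m is at most the number of nonempty cells
  have hNmD : Nm ≤ D.card := by
    apply covN_le_card _ _ D I
    · intro k _
      simp only [hI]; show Metric.ediam _ ≤ _; rw [Real.ediam_Ico]
      apply ENNReal.ofReal_le_ofReal
      nlinarith
    · intro x hx
      have hx01 := hsub m hx
      set k := ⌊x / r ^ m⌋₊ with hk
      have hk1 : (k : ℝ) ≤ x / r ^ m := Nat.floor_le (div_nonneg hx01.1 hrm.le)
      have hk2 : x / r ^ m < (k : ℝ) + 1 := Nat.lt_floor_add_one _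
      have hlow : (k : ℝ) * r ^ m ≤ x := (le_div_iff₀ hrm).mp hk1
      have hhigh : x < ((k : ℝ) + 1) * r ^ m := (div_lt_iff₀ hrm).mp hk2
      have hxI : x ∈ I k := by simp only [hI]; exact ⟨hlow, hhigh⟩
      have hkK : k < K := by
        have h1 : x / r ^ m < 1 / r ^ m := by
          gcongr
          exact hx01.2
        have h2 : (1 : ℝ) / r ^ m ≤ (K : ℝ) := Nat.le_ceil _
        have : (k : ℝ) < (K : ℝ) := lt_of_le_of_lt hk1 (lt_of_lt_of_le h1 h2)
        exact_mod_cast this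
      exact ⟨k, Finset.mem_filter.mpr ⟨Finset.mem_range.mpr hkK, ⟨x, hx, hxI⟩⟩, hxI⟩
  -- choose a representative point in each nonempty cell
  set pt : ℕ → ℝ :=
    fun k => if h : (iterPts f m ∩ I k).Nonempty then h.choose else 0 with hptdef
  have hpt : ∀ k ∈ D, pt k ∈ iterPts f m ∩ I k := by
    intro k hk
    have h := (Finset.mem_filter.mp hk).2
    simp only [hptdef, dif_pos h]
    exact h.choose_spec
  -- the cover elements meeting each translated copy
  set q : ℕ → Fin NN → Prop :=
    fun k i => ((c i) ∩ Set.Ico (pt k) (pt k + r ^ m)).Nonempty with hq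
  set T : ℕ → Finset (Fin NN) := fun k => Finset.univ.filter (q k) with hT
  -- each translated copy needs at least N_n cover elements
  have hNnT : ∀ k ∈ D, Nn ≤ (T k).card := by
    intro k hk
    obtain ⟨hptX, hptI⟩ := hpt k hk
    set g : ℝ → ℝ := fun z => (z - pt k) / r ^ m with hg
    have hlip : LipschitzWith ((r ^ m)⁻¹).toNNReal g := by
      apply LipschitzWith.of_dist_le_mul
      intro x y
      rw [Real.coe_toNNReal _ (by positivity)]
      have h1 : g x - g y = (x - y) * (r ^ m)⁻¹ := by
        simp only [hg]; field_simp; ring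
      rw [Real.dist_eq, Real.dist_eq, h1, abs_mul, abs_of_pos (inv_pos.mpr hrm),
        mul_comm]
    apply covN_le_card (r ^ n) (iterPts f n) (T k)
      (fun i => g '' ((c i) ∩ Set.Ico (pt k) (pt k + r ^ m)))
    · intro i _
      calc EMetric.diam (g '' ((c i) ∩ Set.Ico (pt k) (pt k + r ^ m)))
          ≤ ((r ^ m)⁻¹).toNNReal * EMetric.diam ((c i) ∩ Set.Ico (pt k) (pt k + r ^ m)) :=
            hlip.ediam_image_le _
        _ ≤ ENNReal.ofReal ((r ^ m)⁻¹) * ENNReal.ofReal (r ^ (m + n)) := by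
            apply mul_le_mul' le_rfl
            exact (EMetric.diam_mono Set.inter_subset_left).trans (hcd i)
        _ = ENNReal.ofReal (r ^ n) := by
            rw [← ENNReal.ofReal_mul (by positivity)]
            congr 1
            rw [pow_add]
            field_simp
    · intro y hy
      have hy01 := hsub n hy
      have hzX : pt k + r ^ m * y ∈ iterPts f (m + n) :=
        add_mem_iterPts f r a hf m n _ y hptX hy
      obtain ⟨i, hi⟩ := Set.mem_iUnion.mp (hcc hzX)
      have hzI : pt k + r ^ m * y ∈ Set.Ico (pt k) (pt k + r ^ m) := by
        constructor
        · nlinarith [hy01.1]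
        · nlinarith [hy01.2]
      refine ⟨i, Finset.mem_filter.mpr ⟨Finset.mem_univ _, ⟨_, hi, hzI⟩⟩, ?_⟩
      refine ⟨pt k + r ^ m * y, ⟨hi, hzI⟩, ?_⟩
      simp only [hg]
      field_simp
      ring
  -- double counting
  have hsum1 : D.card * Nn ≤ ∑ k ∈ D, (T k).card := by
    have := Finset.card_nsmul_le_sum D (fun k => (T k).card) Nn hNnT
    simpa [smul_eq_mul] using this
  have hsum2 : ∑ k ∈ D, (T k).card
      = ∑ i : Fin NN, (D.filter (fun k => q k i)).card := by
    have h1 : ∀ k, (T k).card = ∑ i : Fin NN, if q k i then 1 else 0 := by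
      intro k
      simp only [hT]
      exact Finset.card_filter _ _
    simp only [h1]
    rw [Finset.sum_comm]
    exact Finset.sum_congr rfl (fun i _ => (Finset.card_filter _ _).symm)
  have hfiber : ∀ i : Fin NN, (D.filter (fun k => q k i)).card ≤ 3 := by
    intro i
    by_cases hF : (D.filter (fun k => q k i)).Nonempty
    · set F := D.filter (fun k => q k i) with hFdef
      set k0 := F.min' hF with hk0
      have hk0F : k0 ∈ F := F.min'_mem hF
      have key : ∀ k ∈ F, k ≤ k0 + 2 := by
        intro k hkF
        have hqk : q k i := (Finset.mem_filter.mp hkF).2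
        have hqk0 : q k0 i := (Finset.mem_filter.mp hk0F).2
        obtain ⟨p, hpc, hpI⟩ := hqk
        obtain ⟨p0, hp0c, hp0I⟩ := hqk0
        have hdist : dist p p0 ≤ r ^ (m + n) := by
          have h1 := (EMetric.edist_le_diam_of_mem hpc hp0c).trans (hcd i)
          rw [edist_dist] at h1
          exact (ENNReal.ofReal_le_ofReal_iff hrmn.le).mp h1
        have habs : |p - p0| ≤ r ^ (m + n) := by rwa [Real.dist_eq] at hdist
        have hpp : p - p0 ≤ r ^ (m + n) := (le_abs_self _).trans habs
        have hptk := (hpt k (Finset.mem_filter.mp hkF).1).2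
        have hptk0 := (hpt k0 (Finset.mem_filter.mp hk0F).1).2
        simp only [hI, Set.mem_Ico] at hptk hptk0
        have hmul : (k : ℝ) * r ^ m < ((k0 : ℝ) + 3) * r ^ m := by
          have e1 : (k : ℝ) * r ^ m ≤ pt k := hptk.1
          have e2 : pt k ≤ p := hpI.1
          have e3 : p0 < pt k0 + r ^ m := hp0I.2
          have e4 : pt k0 < ((k0 : ℝ) + 1) * r ^ m := hptk0.2
          nlinarith
        have hcast : (k : ℝ) < (k0 : ℝ) + 3 := lt_of_mul_lt_mul_right hmul hrm.le
        have : k < k0 + 3 := by exact_mod_cast hcast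
        omega
      have hsubIcc : F ⊆ Finset.Icc k0 (k0 + 2) :=
        fun k hk => Finset.mem_Icc.mpr ⟨F.min'_le k hk, key k hk⟩
      calc F.card ≤ (Finset.Icc k0 (k0 + 2)).card := Finset.card_le_card hsubIcc
        _ = 3 := by rw [Nat.card_Icc]; omega
    · rw [Finset.not_nonempty_iff_eq_empty.mp hF]
      simp
  have hsum3 : ∑ i : Fin NN, (D.filter (fun k => q k i)).card ≤ 3 * NN := by
    calc ∑ i : Fin NN, (D.filter (fun k => q k i)).card
        ≤ ∑ _i : Fin NN, 3 := Finset.sum_le_sum (fun i _ => hfiber i)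
      _ = 3 * NN := by simp [Finset.sum_const, Finset.card_univ, mul_comm]
  have hNm1 : 1 ≤ Nm := one_le_covN _ _ (hfin m) (hne' m)
  have hNn1 : 1 ≤ Nn := one_le_covN _ _ (hfin n) (hne' n)
  have hmain : Nm * Nn ≤ 3 * NN := by
    calc Nm * Nn ≤ D.card * Nn := Nat.mul_le_mul_right _ hNmD
      _ ≤ ∑ k ∈ D, (T k).card := hsum1
      _ = _ := hsum2
      _ ≤ 3 * NN := hsum3
  have hNN1 : 1 ≤ NN := by
    rcases Nat.eq_zero_or_pos NN with h | h
    · rw [h, mul_zero] at hmain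
      have h1 : 1 * 1 ≤ Nm * Nn := Nat.mul_le_mul hNm1 hNn1
      omega
    · exact h
  have hNmR : (0 : ℝ) < (Nm : ℝ) := by exact_mod_cast hNm1
  have hNnR : (0 : ℝ) < (Nn : ℝ) := by exact_mod_cast hNn1
  have hNNR : (0 : ℝ) < (NN : ℝ) := by exact_mod_cast hNN1
  have hcastmain : (Nm : ℝ) * (Nn : ℝ) ≤ 3 * (NN : ℝ) := by exact_mod_cast hmain
  have hlog : Real.log ((Nm : ℝ) * Nn) ≤ Real.log (3 * (NN : ℝ)) :=
    Real.log_le_log (by positivity) hcastmain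
  rw [Real.log_mul hNmR.ne' hNnR.ne', Real.log_mul (by norm_num) hNNR.ne'] at hlog
  linarith
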